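/- Let q be a prime and let f(x), g(x) be polynomials with integer coefficients, each of which has at least one coefficient not divisible by q (i.e., each is not identically zero in ℤ/qℤ). If the system of congruences f(x) ≡ 0 (mod q) and g(x) ≡ 0 (mod q) has exactly ℓ solutions x in ℤ/qℤ, then the resultant R(f, g) is divisible by q^ℓ. -/

import Mathlib

open Polynomial

/-- The Sylvester matrix of two integer polynomials `f` (of degree `n = f.natDegree`)
and `g` (of degree `m = g.natDegree`): an `(m + n) × (m + n)` matrix whose first `m`
rows are shifted copies of the coefficients of `f` (in decreasing order of degree)
and whose last `n` rows are shifted copies of the coefficients of `g`. -/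
def sylvesterMatrix (f g : Polynomial ℤ) :
    Matrix (Fin (g.natDegree + f.natDegree)) (Fin (g.natDegree + f.natDegree)) ℤ :=
  Matrix.of fun i j =>
    if (i : ℕ) < g.natDegree then
      if (i : ℕ) ≤ (j : ℕ) ∧ (j : ℕ) ≤ (i : ℕ) + f.natDegree then
        f.coeff (f.natDegree - ((j : ℕ) - (i : ℕ)))
      else 0
    else
      if (i : ℕ) - g.natDegree ≤ (j : ℕ) ∧ (j : ℕ) ≤ ((i : ℕ) - g.natDegree) + g.natDegree then
        g.coeff (g.natDegree - ((j : ℕ) - ((i : ℕ) - g.natDegree)))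
      else 0

/-- The resultant `R(f, g)` of two integer polynomials, i.e. the determinant of their
Sylvester matrix. -/
def resultant (f g : Polynomial ℤ) : ℤ :=
  (sylvesterMatrix f g).det

open Matrix

/-- If an integer square matrix, reduced mod a prime `q`, kills `ℓ` linearly
independent vectors, then `q^ℓ` divides its determinant. -/
theorem pow_dvd_det_of_ker (q : ℕ) [Fact q.Prime] (ℓ : ℕ) :
    ∀ {N : ℕ} (M : Matrix (Fin N) (Fin N) ℤ) (v : Fin ℓ → Fin N → ZMod q),
    LinearIndependent (ZMod q) v →
    (∀ k, (M.map (Int.cast : ℤ → ZMod q)).mulVec (v k) = 0) →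
    (q : ℤ) ^ ℓ ∣ M.det := by
  induction ℓ with
  | zero => intro N M v _ _; simp
  | succ ℓ ih =>
    intro N M v hv hker
    -- `v 0` is nonzero; pick a coordinate `j` where it is a unit
    have h0 : v 0 ≠ 0 := hv.ne_zero 0
    obtain ⟨j, hj⟩ : ∃ j, v 0 j ≠ 0 := by
      by_contra h; push_neg at h; exact h0 (funext h)
    -- integer lift of `v 0`
    set w : Fin N → ℤ := fun i => ((v 0 i).val : ℤ) with hw
    have hwcast : ∀ i, ((w i : ℤ) : ZMod q) = v 0 i := by
      intro i; simp [hw, ZMod.natCast_val, ZMod.cast_id]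
    -- M *ᵥ w ≡ 0 mod q
    have hMw : ∀ i, (q : ℤ) ∣ (M.mulVec w) i := by
      intro i
      have : ((M.mulVec w i : ℤ) : ZMod q) = 0 := by
        have h1 := congrFun (hker 0) i
        have : ((M.mulVec w i : ℤ) : ZMod q) = (M.map Int.cast *ᵥ v 0) i := by
          simp [Matrix.mulVec, dotProduct, Matrix.map_apply, hwcast]
        rw [this, h1]; rfl
      exact (ZMod.intCast_zmod_eq_zero_iff_dvd _ _).mp this
    choose u hu using hMw
    set M'' : Matrix (Fin N) (Fin N) ℤ := M.updateCol j u with hM''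
    -- determinant relation : w j * det M = q * det M''
    have hdet : w j * M.det = (q : ℤ) * M''.det := by
      have h1 : (M.updateCol j (fun k => ∑ i, (w i) • M k i)).det = (w j) • M.det :=
        Matrix.det_updateCol_sum M j w
      have h2 : (fun k => ∑ i, (w i) • M k i) = M.mulVec w := by
        funext k; simp [Matrix.mulVec, dotProduct, mul_comm]
      have h3 : M.mulVec w = (q : ℤ) • u := by
        funext i; simp [hu i, Pi.smul_apply]
      rw [h2, h3, Matrix.det_updateCol_smul] at h1
      simpa [smul_eq_mul, mul_comm] using h1.symm
    -- new kernel vectors for M''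
    set c : Fin ℓ → ZMod q := fun k => v k.succ j * (v 0 j)⁻¹ with hc
    set v' : Fin ℓ → Fin N → ZMod q := fun k => v k.succ - c k • v 0 with hv'
    have hv'j : ∀ k, v' k j = 0 := by
      intro k
      have : (v 0 j)⁻¹ * v 0 j = 1 := inv_mul_cancel₀ hj
      simp only [hv', Pi.sub_apply, Pi.smul_apply, smul_eq_mul, hc]
      field_simp
      simp
    have hind : LinearIndependent (ZMod q) v' := by
      rw [Fintype.linearIndependent_iff]
      intro d hd
      have hsum : ∑ i : Fin (ℓ + 1),
          (Fin.cases (-(∑ k, d k * c k)) d i : ZMod q) • v i = 0 := by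
        rw [Fin.sum_univ_succ]
        simp only [Fin.cases_zero, Fin.cases_succ]
        have : ∑ k : Fin ℓ, d k • v' k = 0 := hd
        simp only [hv', smul_sub, Finset.sum_sub_distrib, smul_smul] at this
        rw [sub_eq_zero] at this
        rw [this, ← Finset.sum_smul]
        simp [add_comm]
      have := Fintype.linearIndependent_iff.mp hv _ hsum
      intro k
      simpa using this k.succ
    have hker' : ∀ k, (M''.map (Int.cast : ℤ → ZMod q)).mulVec (v' k) = 0 := by
      intro k
      have hmap : M''.map (Int.cast : ℤ → ZMod q)
          = (M.map (Int.cast : ℤ → ZMod q)).updateCol j (fun i => ((u i : ℤ) : ZMod q)) := by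
        funext a b
        by_cases hb : b = j <;> simp [hM'', Matrix.updateCol_apply, hb, Matrix.map_apply]
      rw [hmap]
      have hstep : ((M.map (Int.cast : ℤ → ZMod q)).updateCol j
          (fun i => ((u i : ℤ) : ZMod q))).mulVec (v' k)
          = (M.map (Int.cast : ℤ → ZMod q)).mulVec (v' k) := by
        funext i
        simp only [Matrix.mulVec, dotProduct]
        refine Finset.sum_congr rfl fun t _ => ?_
        by_cases ht : t = j
        · subst ht; rw [hv'j k]; ring
        · simp [Matrix.updateCol_apply, ht]
      rw [hstep, hv']
      have := hker k.succ
      have h0 := hker 0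
      simp only [Matrix.mulVec_sub]
      rw [Matrix.mulVec_smul, this, h0]
      simp
    have hih := ih M'' v' hind hker'
    have hdvd : (q : ℤ) ^ (ℓ + 1) ∣ w j * M.det := by
      rw [hdet, pow_succ, mul_comm ((q:ℤ)^ℓ) (q:ℤ)]
      exact mul_dvd_mul_left _ hih
    have hqp : Prime (q : ℤ) := Int.prime_iff_natAbs_prime.mpr (by simpa using (Fact.out : q.Prime))
    have hnd : ¬ (q : ℤ) ∣ w j := by
      intro hdvd'
      have : ((w j : ℤ) : ZMod q) = 0 := (ZMod.intCast_zmod_eq_zero_iff_dvd _ _).mpr hdvd'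
      rw [hwcast j] at this
      exact hj this
    exact (Prime.pow_dvd_of_dvd_mul_left hqp _ hnd hdvd)

/-- A single "row dot Vandermonde vector" computation. -/
theorem row_dot (q : ℕ) (p : Polynomial ℤ) (a : ZMod q) (N i : ℕ) (hiN : i + p.natDegree < N) :
    ∑ j ∈ Finset.range N,
      (if i ≤ j ∧ j ≤ i + p.natDegree then ((p.coeff (p.natDegree - (j - i)) : ℤ) : ZMod q) else 0)
        * a ^ (N - 1 - j)
    = a ^ (N - 1 - i - p.natDegree) * (p.map (Int.castRingHom (ZMod q))).eval a := by
  set n := p.natDegree with hn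
  have h1 : ∀ j, (if i ≤ j ∧ j ≤ i + n then ((p.coeff (n - (j - i)) : ℤ) : ZMod q) else 0)
      * a ^ (N - 1 - j)
      = if j ∈ Finset.Icc i (i + n) then ((p.coeff (n - (j - i)) : ℤ) : ZMod q) * a ^ (N - 1 - j)
        else 0 := by
    intro j
    by_cases h : i ≤ j ∧ j ≤ i + n
    · rw [if_pos h, if_pos (Finset.mem_Icc.mpr h)]
    · rw [if_neg h, if_neg (fun hc => h (Finset.mem_Icc.mp hc)), zero_mul]
  rw [Finset.sum_congr rfl fun j _ => h1 j, Finset.sum_ite_mem]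
  have h2 : Finset.range N ∩ Finset.Icc i (i + n) = Finset.Icc i (i + n) := by
    apply Finset.inter_eq_right.mpr
    intro j hj
    rw [Finset.mem_Icc] at hj
    rw [Finset.mem_range]
    omega
  rw [h2, ← Finset.Ico_add_one_right_eq_Icc, Finset.sum_Ico_eq_sum_range]
  have h3 : i + n + 1 - i = n + 1 := by omega
  rw [h3]
  rw [← Finset.sum_range_reflect]
  have h4 : ∀ k ∈ Finset.range (n + 1),
      ((p.coeff (n - (i + (n + 1 - 1 - k) - i)) : ℤ) : ZMod q) * a ^ (N - 1 - (i + (n + 1 - 1 - k)))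
      = a ^ (N - 1 - i - n) * (((p.coeff k : ℤ) : ZMod q) * a ^ k) := by
    intro k hk
    rw [Finset.mem_range] at hk
    have e1 : n - (i + (n + 1 - 1 - k) - i) = k := by omega
    have e2 : N - 1 - (i + (n + 1 - 1 - k)) = (N - 1 - i - n) + k := by omega
    rw [e1, e2, pow_add]
    ring
  rw [Finset.sum_congr rfl h4, ← Finset.mul_sum]
  congr 1
  have hdeg : (p.map (Int.castRingHom (ZMod q))).natDegree < n + 1 :=
    lt_of_le_of_lt Polynomial.natDegree_map_le (by omega)
  rw [Polynomial.eval_eq_sum_range' hdeg]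
  exact Finset.sum_congr rfl fun k _ => by rw [Polynomial.coeff_map]; rfl

theorem sylvester_mulVec (q : ℕ) (f g : Polynomial ℤ) (a : ZMod q)
    (hfa : (f.map (Int.castRingHom (ZMod q))).eval a = 0)
    (hga : (g.map (Int.castRingHom (ZMod q))).eval a = 0) :
    ((sylvesterMatrix f g).map (Int.cast : ℤ → ZMod q)).mulVec
      (fun j : Fin (g.natDegree + f.natDegree) => a ^ (g.natDegree + f.natDegree - 1 - (j : ℕ)))
      = 0 := by
  set n := f.natDegree
  set m := g.natDegree
  set N := m + n with hN
  funext i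
  simp only [Matrix.mulVec, dotProduct, Pi.zero_apply]
  by_cases him : (i : ℕ) < m
  · have key := row_dot q f a N i (by omega)
    rw [← Fin.sum_univ_eq_sum_range
      (fun j => (if (i:ℕ) ≤ j ∧ j ≤ (i:ℕ) + f.natDegree
        then ((f.coeff (f.natDegree - (j - (i:ℕ))) : ℤ) : ZMod q) else 0) * a ^ (N - 1 - j)) N]
      at key
    rw [show (∑ j : Fin N, ((sylvesterMatrix f g).map (Int.cast : ℤ → ZMod q)) i j
        * a ^ (N - 1 - (j:ℕ)))
      = ∑ j : Fin N, (if (i:ℕ) ≤ (j:ℕ) ∧ (j:ℕ) ≤ (i:ℕ) + f.natDegree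
        then ((f.coeff (f.natDegree - ((j:ℕ) - (i:ℕ))) : ℤ) : ZMod q) else 0)
        * a ^ (N - 1 - (j:ℕ)) from Finset.sum_congr rfl fun j _ => by
          simp only [sylvesterMatrix, Matrix.map_apply, Matrix.of_apply, if_pos him]
          split_ifs <;> simp]
    rw [key, hfa, mul_zero]
  · have hi2 : (i : ℕ) - m + g.natDegree < N := by
      have := i.isLt
      omega
    have key := row_dot q g a N ((i : ℕ) - m) hi2
    rw [← Fin.sum_univ_eq_sum_range
      (fun j => (if (i:ℕ) - m ≤ j ∧ j ≤ (i:ℕ) - m + g.natDegree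
        then ((g.coeff (g.natDegree - (j - ((i:ℕ) - m))) : ℤ) : ZMod q) else 0) * a ^ (N - 1 - j)) N]
      at key
    rw [show (∑ j : Fin N, ((sylvesterMatrix f g).map (Int.cast : ℤ → ZMod q)) i j
        * a ^ (N - 1 - (j:ℕ)))
      = ∑ j : Fin N, (if (i:ℕ) - m ≤ (j:ℕ) ∧ (j:ℕ) ≤ (i:ℕ) - m + g.natDegree
        then ((g.coeff (g.natDegree - ((j:ℕ) - ((i:ℕ) - m))) : ℤ) : ZMod q) else 0)
        * a ^ (N - 1 - (j:ℕ)) from Finset.sum_congr rfl fun j _ => by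
          simp only [sylvesterMatrix, Matrix.map_apply, Matrix.of_apply, if_neg (show ¬ (i:ℕ) < g.natDegree from him)]
          split_ifs <;> simp [m]]
    rw [key, hga, mul_zero]

theorem vand_indep (q : ℕ) [Fact q.Prime] (N ℓ : ℕ) (hℓN : ℓ ≤ N)
    (e : Fin ℓ → ZMod q) (he : Function.Injective e) :
    LinearIndependent (ZMod q)
      (fun k : Fin ℓ => fun j : Fin N => e k ^ (N - 1 - (j : ℕ))) := by
  rw [Fintype.linearIndependent_iff]
  intro d hd
  have hvm : Matrix.vecMul d (Matrix.vandermonde e) = 0 := by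
    funext t
    have ht : (N - 1 - (t : ℕ)) < N := by have := t.isLt; omega
    have hcoord := congrFun hd ⟨N - 1 - (t : ℕ), by have := t.isLt; omega⟩
    simp only [Finset.sum_apply, Pi.smul_apply, smul_eq_mul, Pi.zero_apply] at hcoord
    have hexp : N - 1 - (N - 1 - (t : ℕ)) = (t : ℕ) := by have := t.isLt; omega
    rw [hexp] at hcoord
    simpa [Matrix.vecMul, dotProduct, Matrix.vandermonde] using hcoord
  have hdet : (Matrix.vandermonde e).det ≠ 0 := Matrix.det_vandermonde_ne_zero_iff.mpr he
  have := Matrix.eq_zero_of_vecMul_eq_zero hdet hvm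
  exact fun k => congrFun this k

/-- **Theorem 1.** Let `q` be a prime and `f, g` integer polynomials, each not
identically zero in `ℤ/qℤ`. If the system `f(x) ≡ g(x) ≡ 0 (mod q)` has exactly `ℓ`
solutions in `ℤ/qℤ`, then `q^ℓ ∣ R(f, g)`. -/
theorem resultant_dvd_of_common_roots (q : ℕ) [Fact q.Prime] (f g : Polynomial ℤ)
    (hf : f.map (Int.castRingHom (ZMod q)) ≠ 0)
    (hg : g.map (Int.castRingHom (ZMod q)) ≠ 0)
    (ℓ : ℕ)
    (hℓ : (Finset.univ.filter fun x : ZMod q =>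
        (f.map (Int.castRingHom (ZMod q))).eval x = 0 ∧
        (g.map (Int.castRingHom (ZMod q))).eval x = 0).card = ℓ) :
    (q : ℤ) ^ ℓ ∣ _root_.resultant f g := by
  classical
  set S := (Finset.univ.filter fun x : ZMod q =>
      (f.map (Int.castRingHom (ZMod q))).eval x = 0 ∧
      (g.map (Int.castRingHom (ZMod q))).eval x = 0) with hS
  set n := f.natDegree
  set m := g.natDegree
  set N := m + n with hN
  -- `ℓ ≤ n ≤ N`
  have hsub : S ⊆ (f.map (Int.castRingHom (ZMod q))).roots.toFinset := by
    intro x hx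
    rw [Multiset.mem_toFinset, Polynomial.mem_roots hf]
    exact (Finset.mem_filter.mp hx).2.1
  have hℓn : ℓ ≤ n := by
    calc ℓ = S.card := hℓ.symm
    _ ≤ (f.map (Int.castRingHom (ZMod q))).roots.toFinset.card := Finset.card_le_card hsub
    _ ≤ Multiset.card (f.map (Int.castRingHom (ZMod q))).roots := Multiset.toFinset_card_le _
    _ ≤ (f.map (Int.castRingHom (ZMod q))).natDegree := Polynomial.card_roots' _
    _ ≤ n := Polynomial.natDegree_map_le
  have hℓN : ℓ ≤ N := le_trans hℓn (by omega)
  -- enumerate the common roots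
  have hcard : S.card = ℓ := hℓ
  let φ : Fin ℓ ≃ S := (S.equivFin.trans (finCongr hcard)).symm
  let e : Fin ℓ → ZMod q := fun k => (φ k : ZMod q)
  have he : Function.Injective e := fun a b hab => φ.injective (Subtype.ext hab)
  have heS : ∀ k, e k ∈ S := fun k => (φ k).2
  -- the kernel vectors
  apply pow_dvd_det_of_ker q ℓ (sylvesterMatrix f g)
    (fun k => fun j : Fin N => e k ^ (N - 1 - (j : ℕ)))
  · exact vand_indep q N ℓ hℓN e he
  · intro k
    have hmem := Finset.mem_filter.mp (heS k)
    exact sylvester_mulVec q f g (e k) hmem.2.1 hmem.2.2
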